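/- Let E be a rational expression over (Σ, X) and let x be a variable in X. Let Γ = {b ∈ Σ_0 | an operator ·_b or ^{*_b} occurs in E}, and let a be a fresh symbol of rank 0 not in Σ. Then E ∼_{Σ∖Γ} (E_{x←a}) ·_a x, i.e. for every tuple 𝓛 of tree languages over Σ∖Γ (one language per variable of X), the 𝓛-language of E equals the 𝓛-language of (E_{x←a}) ·_a x, both interpreted as rational expressions over (Σ∪{a}, X). -/
import Mathlib


attribute [local instance] Classical.propDecidable

inductive GTree (α : Type) (ar : α → ℕ) : Type
  | node (f : α) (children : Fin (ar f) → GTree α ar) : GTree α ar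

namespace GTree

variable {α : Type} {ar : α → ℕ}

def cprod (c : α) : GTree α ar → Set (GTree α ar) → Set (GTree α ar)
  | node f ch, L =>
    if f = c then L
    else { s | ∃ ch' : Fin (ar f) → GTree α ar,
            s = node f ch' ∧ ∀ i, ch' i ∈ cprod c (ch i) L }

def lprod (c : α) (L L' : Set (GTree α ar)) : Set (GTree α ar) :=
  ⋃ t ∈ L, cprod c t L'

def leaf (c : α) (hc : ar c = 0) : GTree α ar :=
  node c (fun i => (i.cast hc).elim0)

def iterProd (c : α) (hc : ar c = 0) (L : Set (GTree α ar)) : ℕ → Set (GTree α ar)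
  | 0 => {leaf c hc}
  | n + 1 => iterProd c hc L n ∪ lprod c L (iterProd c hc L n)

def closure (c : α) (hc : ar c = 0) (L : Set (GTree α ar)) : Set (GTree α ar) :=
  ⋃ n, iterProd c hc L n

def occurs (a : α) : GTree α ar → Prop
  | node f ch => f = a ∨ ∃ i, occurs a (ch i)

end GTree

/-- Rational tree expressions over alphabet `(α, ar)` and variables `V`.
In the products and closures, the subscript symbol is required to have rank 0. -/
inductive RExp (α : Type) (ar : α → ℕ) (V : Type) : Type
  | zero : RExp α ar V
  | var (v : V) : RExp α ar V
  | node (f : α) (es : Fin (ar f) → RExp α ar V) : RExp α ar V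
  | plus (e₁ e₂ : RExp α ar V) : RExp α ar V
  | prod (c : α) (hc : ar c = 0) (e₁ e₂ : RExp α ar V) : RExp α ar V
  | star (c : α) (hc : ar c = 0) (e : RExp α ar V) : RExp α ar V

namespace RExp

variable {α : Type} {ar : α → ℕ} {V : Type}

/-- The `𝓛`-language denoted by a rational expression, where `ρ` assigns a
tree language to each variable. -/
def lang (ρ : V → Set (GTree α ar)) : RExp α ar V → Set (GTree α ar)
  | zero => ∅
  | var v => ρ v
  | node f es => { t | ∃ ch : Fin (ar f) → GTree α ar,
      t = GTree.node f ch ∧ ∀ i, ch i ∈ lang ρ (es i) }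
  | plus e₁ e₂ => lang ρ e₁ ∪ lang ρ e₂
  | prod c _ e₁ e₂ => GTree.lprod c (lang ρ e₁) (lang ρ e₂)
  | star c hc e => GTree.closure c hc (lang ρ e)

/-- Substitution of the expression `F` for the variable `x`. -/
noncomputable def subst (x : V) (F : RExp α ar V) : RExp α ar V → RExp α ar V
  | zero => zero
  | var v => if v = x then F else var v
  | node f es => node f (fun i => subst x F (es i))
  | plus e₁ e₂ => plus (subst x F e₁) (subst x F e₂)
  | prod c hc e₁ e₂ => prod c hc (subst x F e₁) (subst x F e₂)
  | star c hc e => star c hc (subst x F e)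

/-- The variable `v` occurs in the expression. -/
def varOcc (v : V) : RExp α ar V → Prop
  | zero => False
  | var w => w = v
  | node _ es => ∃ i, varOcc v (es i)
  | plus e₁ e₂ => varOcc v e₁ ∨ varOcc v e₂
  | prod _ _ e₁ e₂ => varOcc v e₁ ∨ varOcc v e₂
  | star _ _ e => varOcc v e

/-- The symbol `b` is the subscript of a product `·_b` or a closure `^{*_b}`
occurring in the expression. -/
def opSym (b : α) : RExp α ar V → Prop
  | zero => False
  | var _ => False
  | node _ es => ∃ i, opSym b (es i)
  | plus e₁ e₂ => opSym b e₁ ∨ opSym b e₂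
  | prod c _ e₁ e₂ => c = b ∨ opSym b e₁ ∨ opSym b e₂
  | star c _ e => c = b ∨ opSym b e

/-- The symbol `s` occurs somewhere in the expression (as a node symbol or as
the subscript of an operator). -/
def symIn (s : α) : RExp α ar V → Prop
  | zero => False
  | var _ => False
  | node f es => f = s ∨ ∃ i, symIn s (es i)
  | plus e₁ e₂ => symIn s e₁ ∨ symIn s e₂
  | prod c _ e₁ e₂ => c = s ∨ symIn s e₁ ∨ symIn s e₂
  | star c _ e => c = s ∨ symIn s e

end RExp

/-- The output function of a tree automaton with transition set `Δ`:
`δ(f(t₁,…,tₙ)) = {q | ∃(f,q₁,…,qₙ,q) ∈ Δ, ∀ i, qᵢ ∈ δ(tᵢ)}`. -/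
def GTree.out {α : Type} {ar : α → ℕ} {Q : Type}
    (Δ : Set (Sigma fun f : α => (Fin (ar f) → Q) × Q)) : GTree α ar → Set Q
  | .node f ch => { q | ∃ qs : Fin (ar f) → Q,
      (⟨f, qs, q⟩ : Sigma fun f : α => (Fin (ar f) → Q) × Q) ∈ Δ ∧
      ∀ i, qs i ∈ GTree.out Δ (ch i) }


section Aux

namespace GTree

variable {α : Type} {ar : α → ℕ}

def nodeSet (f : α) (S : Fin (ar f) → Set (GTree α ar)) : Set (GTree α ar) :=
  { t | ∃ ch : Fin (ar f) → GTree α ar, t = node f ch ∧ ∀ i, ch i ∈ S i }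

lemma cprod_node_ne {c f : α} (h : f ≠ c) (ch : Fin (ar f) → GTree α ar)
    (L : Set (GTree α ar)) :
    cprod c (node f ch) L = nodeSet f (fun i => cprod c (ch i) L) := by
  simp [cprod, h, nodeSet]

lemma cprod_node_eq (c : α) (ch : Fin (ar c) → GTree α ar) (L : Set (GTree α ar)) :
    cprod c (node c ch) L = L := by simp [cprod]

lemma mem_lprod {c : α} {t : GTree α ar} {L L' : Set (GTree α ar)} :
    t ∈ lprod c L L' ↔ ∃ u ∈ L, t ∈ cprod c u L' := by
  simp [lprod]

lemma lprod_union (c : α) (A B L : Set (GTree α ar)) :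
    lprod c (A ∪ B) L = lprod c A L ∪ lprod c B L := by
  ext t; simp only [mem_lprod, Set.mem_union]
  constructor
  · rintro ⟨u, hu | hu, ht⟩
    · exact Or.inl ⟨u, hu, ht⟩
    · exact Or.inr ⟨u, hu, ht⟩
  · rintro (⟨u, hu, ht⟩ | ⟨u, hu, ht⟩)
    · exact ⟨u, Or.inl hu, ht⟩
    · exact ⟨u, Or.inr hu, ht⟩

lemma lprod_iUnion {ι : Sort*} (c : α) (A : ι → Set (GTree α ar)) (L : Set (GTree α ar)) :
    lprod c (⋃ i, A i) L = ⋃ i, lprod c (A i) L := by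
  ext t
  simp only [mem_lprod, Set.mem_iUnion]
  constructor
  · rintro ⟨u, ⟨i, hu⟩, ht⟩; exact ⟨i, u, hu, ht⟩
  · rintro ⟨i, u, hu, ht⟩; exact ⟨u, ⟨i, hu⟩, ht⟩

lemma lprod_singleton (c : α) (t : GTree α ar) (L : Set (GTree α ar)) :
    lprod c {t} L = cprod c t L := by
  simp [lprod]

lemma cprod_of_not_occurs {c : α} {t : GTree α ar} (h : ¬ occurs c t)
    (L : Set (GTree α ar)) : cprod c t L = {t} := by
  induction t with
  | node f ch ih =>
    have hf : f ≠ c := fun hfc => h (Or.inl hfc)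
    rw [cprod_node_ne hf]
    ext s
    constructor
    · rintro ⟨ch', rfl, hch⟩
      have he : ∀ i, ch' i = ch i := fun i => by
        have h2 : ch' i ∈ cprod c (ch i) L := hch i
        rw [ih i (fun ho => h (Or.inr ⟨i, ho⟩))] at h2
        exact h2
      simp [funext he]
    · rintro rfl
      exact ⟨ch, rfl, fun i =>
        show ch i ∈ cprod c (ch i) L by
          rw [ih i (fun ho => h (Or.inr ⟨i, ho⟩))]; rfl⟩

lemma lprod_of_not_occurs {c : α} {L X : Set (GTree α ar)}
    (hL : ∀ u ∈ L, ¬ occurs c u) : lprod c L X = L := by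
  ext t; rw [mem_lprod]; constructor
  · rintro ⟨u, hu, ht⟩
    rw [cprod_of_not_occurs (hL u hu)] at ht
    exact ht ▸ hu
  · intro ht
    exact ⟨t, ht, by rw [cprod_of_not_occurs (hL t ht)]; rfl⟩

lemma nodeSet_of_arity_zero {f : α} (hf : ar f = 0) (S : Fin (ar f) → Set (GTree α ar))
    (ch : Fin (ar f) → GTree α ar) : nodeSet f S = {node f ch} := by
  ext t; constructor
  · rintro ⟨ch', rfl, -⟩
    have : ch' = ch := funext fun i => (i.cast hf).elim0
    simp [this]
  · rintro rfl
    exact ⟨ch, rfl, fun i => (i.cast hf).elim0⟩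

lemma lprod_nodeSet {a f : α} (h : f ≠ a) (S : Fin (ar f) → Set (GTree α ar))
    (L : Set (GTree α ar)) :
    lprod a (nodeSet f S) L = nodeSet f (fun i => lprod a (S i) L) := by
  ext t; constructor
  · intro ht
    obtain ⟨u, hu, htc⟩ := mem_lprod.1 ht
    obtain ⟨ch, rfl, hch⟩ := hu
    rw [cprod_node_ne h] at htc
    obtain ⟨ch', rfl, hch'⟩ := htc
    exact ⟨ch', rfl, fun i => mem_lprod.2 ⟨ch i, hch i, hch' i⟩⟩
  · rintro ⟨ch', rfl, hch'⟩
    choose u hu hcu using fun i => mem_lprod.1 (hch' i)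
    refine mem_lprod.2 ⟨node f u, ⟨u, rfl, hu⟩, ?_⟩
    rw [cprod_node_ne h]
    exact ⟨ch', rfl, hcu⟩

lemma cprod_dist {a c : α} (ha : ar a = 0) (hc : ar c = 0) (hca : c ≠ a)
    {L : Set (GTree α ar)} (hL : ∀ u ∈ L, ¬ occurs c u)
    (t : GTree α ar) (B : Set (GTree α ar)) :
    lprod a (cprod c t B) L = lprod c (cprod a t L) (lprod a B L) := by
  induction t with
  | node f ch ih =>
    by_cases hfc : f = c
    · subst hfc
      rw [cprod_node_eq, cprod_node_ne hca, nodeSet_of_arity_zero hc _ ch,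
        lprod_singleton, cprod_node_eq]
    · by_cases hfa : f = a
      · subst hfa
        rw [cprod_node_ne hfc, nodeSet_of_arity_zero ha _ ch,
          lprod_singleton, cprod_node_eq, lprod_of_not_occurs hL]
      · rw [cprod_node_ne hfc, cprod_node_ne hfa, lprod_nodeSet hfa,
          lprod_nodeSet hfc]
        exact congrArg (nodeSet f) (funext fun i => ih i)

lemma lprod_dist {a c : α} (ha : ar a = 0) (hc : ar c = 0) (hca : c ≠ a)
    {L : Set (GTree α ar)} (hL : ∀ u ∈ L, ¬ occurs c u)
    (A B : Set (GTree α ar)) :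
    lprod a (lprod c A B) L = lprod c (lprod a A L) (lprod a B L) := by
  ext t; constructor
  · intro ht
    obtain ⟨u, hu, htc⟩ := mem_lprod.1 ht
    obtain ⟨s, hs, hsc⟩ := mem_lprod.1 hu
    have h2 : t ∈ lprod a (cprod c s B) L := mem_lprod.2 ⟨u, hsc, htc⟩
    rw [cprod_dist ha hc hca hL s B] at h2
    obtain ⟨w, hw, htw⟩ := mem_lprod.1 h2
    exact mem_lprod.2 ⟨w, mem_lprod.2 ⟨s, hs, hw⟩, htw⟩
  · intro ht
    obtain ⟨w, hw, htw⟩ := mem_lprod.1 ht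
    obtain ⟨s, hs, hws⟩ := mem_lprod.1 hw
    have h2 : t ∈ lprod c (cprod a s L) (lprod a B L) := mem_lprod.2 ⟨w, hws, htw⟩
    rw [← cprod_dist ha hc hca hL s B] at h2
    obtain ⟨u, hu, htu⟩ := mem_lprod.1 h2
    exact mem_lprod.2 ⟨u, mem_lprod.2 ⟨s, hs, hu⟩, htu⟩

lemma not_occurs_leaf {a c : α} (hca : c ≠ a) (hc : ar c = 0) :
    ¬ occurs a (leaf c hc) := by
  rintro (h | ⟨i, -⟩)
  · exact hca h
  · exact (i.cast hc).elim0

lemma lprod_iterProd {a c : α} (ha : ar a = 0) (hc : ar c = 0) (hca : c ≠ a)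
    {L : Set (GTree α ar)} (hL : ∀ u ∈ L, ¬ occurs c u)
    (A : Set (GTree α ar)) (n : ℕ) :
    lprod a (iterProd c hc A n) L = iterProd c hc (lprod a A L) n := by
  induction n with
  | zero =>
    show lprod a {leaf c hc} L = {leaf c hc}
    rw [lprod_singleton, cprod_of_not_occurs (not_occurs_leaf (fun h => hca h) hc)]
  | succ n ih =>
    show lprod a (iterProd c hc A n ∪ lprod c A (iterProd c hc A n)) L = _
    rw [lprod_union, lprod_dist ha hc hca hL, ih]
    rfl

lemma lprod_closure {a c : α} (ha : ar a = 0) (hc : ar c = 0) (hca : c ≠ a)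
    {L : Set (GTree α ar)} (hL : ∀ u ∈ L, ¬ occurs c u)
    (A : Set (GTree α ar)) :
    lprod a (closure c hc A) L = closure c hc (lprod a A L) := by
  unfold closure
  rw [lprod_iUnion]
  exact Set.iUnion_congr fun n => lprod_iterProd ha hc hca hL A n

end GTree

lemma RExp.lang_node {α : Type} {ar : α → ℕ} {V : Type} (ρ : V → Set (GTree α ar))
    (f : α) (es : Fin (ar f) → RExp α ar V) :
    RExp.lang ρ (RExp.node f es) = GTree.nodeSet f (fun i => RExp.lang ρ (es i)) := rfl

lemma factor_out_main {α : Type} {ar : α → ℕ} {V : Type}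
    (a : α) (ha : ar a = 0) (x : V) (ρ : V → Set (GTree α ar))
    (hA : ∀ v, ∀ t ∈ ρ v, ¬ GTree.occurs a t)
    (E : RExp α ar V) (hfresh : ¬ RExp.symIn a E)
    (hOp : ∀ b, RExp.opSym b E → ∀ v, ∀ t ∈ ρ v, ¬ GTree.occurs b t) :
    GTree.lprod a
        (RExp.lang ρ (RExp.subst x (RExp.node a fun i => (i.cast ha).elim0) E))
        (ρ x)
      = RExp.lang ρ E := by
  revert hfresh hOp
  induction E with
  | zero =>
    intro hfresh hOp
    simp [RExp.subst, RExp.lang, GTree.lprod]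
  | var v =>
    intro hfresh hOp
    by_cases hv : v = x
    · subst hv
      rw [show RExp.subst v (RExp.node a fun i => (i.cast ha).elim0) (RExp.var v)
            = RExp.node a fun i => (i.cast ha).elim0 from by simp [RExp.subst]]
      rw [RExp.lang_node, GTree.nodeSet_of_arity_zero ha _ (fun i => (i.cast ha).elim0),
        GTree.lprod_singleton, GTree.cprod_node_eq]
      rfl
    · rw [show RExp.subst x (RExp.node a fun i => (i.cast ha).elim0) (RExp.var v)
            = RExp.var v from by simp [RExp.subst, hv]]
      exact GTree.lprod_of_not_occurs (fun u hu => hA v u hu)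
  | node f es ih =>
    intro hfresh hOp
    have hfa : f ≠ a := fun h => hfresh (Or.inl h)
    show GTree.lprod a (RExp.lang ρ (RExp.node f
        (fun i => RExp.subst x (RExp.node a fun i => (i.cast ha).elim0) (es i)))) (ρ x) = _
    rw [RExp.lang_node, GTree.lprod_nodeSet hfa, RExp.lang_node]
    exact congrArg (GTree.nodeSet f) (funext fun i =>
      ih i (fun h => hfresh (Or.inr ⟨i, h⟩)) (fun b hb => hOp b ⟨i, hb⟩))
  | plus e₁ e₂ ih₁ ih₂ =>
    intro hfresh hOp
    show GTree.lprod a (RExp.lang ρ _ ∪ RExp.lang ρ _) (ρ x) = _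
    rw [GTree.lprod_union,
      ih₁ (fun h => hfresh (Or.inl h)) (fun b hb => hOp b (Or.inl hb)),
      ih₂ (fun h => hfresh (Or.inr h)) (fun b hb => hOp b (Or.inr hb))]
    rfl
  | prod c hc e₁ e₂ ih₁ ih₂ =>
    intro hfresh hOp
    have hca : c ≠ a := fun h => hfresh (Or.inl h)
    have hL : ∀ u ∈ ρ x, ¬ GTree.occurs c u := hOp c (Or.inl rfl) x
    show GTree.lprod a (GTree.lprod c (RExp.lang ρ _) (RExp.lang ρ _)) (ρ x) = _
    rw [GTree.lprod_dist ha hc hca hL,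
      ih₁ (fun h => hfresh (Or.inr (Or.inl h))) (fun b hb => hOp b (Or.inr (Or.inl hb))),
      ih₂ (fun h => hfresh (Or.inr (Or.inr h))) (fun b hb => hOp b (Or.inr (Or.inr hb)))]
    rfl
  | star c hc e ih =>
    intro hfresh hOp
    have hca : c ≠ a := fun h => hfresh (Or.inl h)
    have hL : ∀ u ∈ ρ x, ¬ GTree.occurs c u := hOp c (Or.inl rfl) x
    show GTree.lprod a (GTree.closure c hc (RExp.lang ρ _)) (ρ x) = _
    rw [GTree.lprod_closure ha hc hca hL,
      ih (fun h => hfresh (Or.inr h)) (fun b hb => hOp b (Or.inr hb))]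
    rfl

end Aux

/-- let `Γ` be the set of symbols `b` such that an operator `·_b`
or `^{*_b}` occurs in `E`, and let `a` be a fresh rank-0 symbol not occurring in
`E` (it is not in `Σ`). Then `E ∼_{Σ∖Γ} (E_{x←a}) ·_a x`: for every assignment
`ρ` of tree languages over `Σ∖Γ` (in particular avoiding `a` and every `b ∈ Γ`)
to the variables, the two expressions denote the same language. -/
theorem factor_out_variable {α : Type} {ar : α → ℕ} {V : Type}
    (E : RExp α ar V) (x : V) (a : α) (ha : ar a = 0)
    (hfresh : ¬ RExp.symIn a E)
    (ρ : V → Set (GTree α ar))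
    (hρ : ∀ v, ∀ t ∈ ρ v,
      ¬ GTree.occurs a t ∧ ∀ b : α, RExp.opSym b E → ¬ GTree.occurs b t) :
    RExp.lang ρ
        (RExp.prod a ha
          (RExp.subst x (RExp.node a fun i => (i.cast ha).elim0) E)
          (RExp.var x)) =
      RExp.lang ρ E := by
  have hA : ∀ v, ∀ t ∈ ρ v, ¬ GTree.occurs a t := fun v t ht => (hρ v t ht).1
  have hOp : ∀ b, RExp.opSym b E → ∀ v, ∀ t ∈ ρ v, ¬ GTree.occurs b t :=
    fun b hb v t ht => (hρ v t ht).2 b hb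
  exact factor_out_main a ha x ρ hA E hfresh hOp
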